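/- For every s ∈ ℂ with Re(s) > n/β, the integral ∫_{ℚ_p^n∖ℤ_p^n} A(ξ)^{−s} dⁿξ converges absolutely and equals ζ(s;A_β) = Σ_{m=1}^∞ p^{mn}(1−p^{−n}) A(p^m)^{−s}; moreover the function s ↦ ζ(s;A_β) is holomorphic on the half-plane {s ∈ ℂ : Re(s) > n/β}. -/

import Mathlib

open MeasureTheory Filter Topology Metric

noncomputable instance qpnMeasurableSpace {p : ℕ} [Fact p.Prime] {n : ℕ} :
    MeasurableSpace (Fin n → ℚ_[p]) := borel _

instance qpnBorelSpace {p : ℕ} [Fact p.Prime] {n : ℕ} :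
    BorelSpace (Fin n → ℚ_[p]) := ⟨rfl⟩

open scoped ENNReal

section Aux
variable {p : ℕ} [hp : Fact p.Prime] {n : ℕ}

lemma aux_one_lt_p : (1 : ℝ) < (p : ℝ) := by exact_mod_cast hp.out.one_lt

lemma aux_p_pos : (0 : ℝ) < (p : ℝ) := lt_trans one_pos aux_one_lt_p

lemma aux_digit_exists (m : ℕ) (y : ℚ_[p]) (hy : ‖y‖ ≤ (p : ℝ) ^ ((m : ℤ) + 1)) :
    ∃ k : Fin p, ‖y - ((k : ℕ) : ℚ_[p]) * (p : ℚ_[p]) ^ (-((m : ℤ) + 1))‖ ≤ (p : ℝ) ^ (m : ℤ) := by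
  have hpQ : ((p : ℚ_[p])) ≠ 0 := Nat.cast_ne_zero.mpr hp.out.ne_zero
  have hz : ‖(p : ℚ_[p]) ^ ((m : ℤ) + 1) * y‖ ≤ 1 := by
    rw [norm_mul, Padic.norm_p_zpow]
    calc (p:ℝ) ^ (-((m:ℤ)+1)) * ‖y‖ ≤ (p:ℝ) ^ (-((m:ℤ)+1)) * (p:ℝ) ^ ((m:ℤ)+1) :=
          mul_le_mul_of_nonneg_left hy (zpow_nonneg aux_p_pos.le _)
    _ = 1 := by rw [← zpow_add₀ (ne_of_gt (aux_p_pos (p := p))), neg_add_cancel, zpow_zero]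
  set z : ℤ_[p] := ⟨_, hz⟩ with hzdef
  have hk : z.appr 1 < p := by simpa using z.appr_lt 1
  refine ⟨⟨z.appr 1, hk⟩, ?_⟩
  have hspec : ‖z - ((z.appr 1 : ℕ) : ℤ_[p])‖ ≤ (p : ℝ) ^ (-(1:ℕ) : ℤ) :=
    (PadicInt.norm_le_pow_iff_mem_span_pow _ 1).mpr (by simpa using z.appr_spec 1)
  have key : y - ((z.appr 1 : ℕ) : ℚ_[p]) * (p : ℚ_[p]) ^ (-((m : ℤ) + 1))
      = (p : ℚ_[p]) ^ (-((m : ℤ) + 1)) * ((z : ℚ_[p]) - ((z.appr 1 : ℕ) : ℚ_[p])) := by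
    have hzq : (z : ℚ_[p]) = (p : ℚ_[p]) ^ ((m : ℤ) + 1) * y := rfl
    rw [hzq, mul_sub, ← mul_assoc, ← zpow_add₀ hpQ, neg_add_cancel, zpow_zero, one_mul]; ring
  have hcoe : ‖(z : ℚ_[p]) - ((z.appr 1 : ℕ) : ℚ_[p])‖ ≤ (p:ℝ)^(-(1:ℕ):ℤ) := by
    have : (((z - ((z.appr 1 : ℕ) : ℤ_[p])) : ℤ_[p]) : ℚ_[p])
        = (z : ℚ_[p]) - ((z.appr 1 : ℕ) : ℚ_[p]) := by push_cast [PadicInt.coe_sub]; ring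
    rw [← this, PadicInt.padic_norm_e_of_padicInt]
    exact hspec
  rw [Fin.val_mk, key, norm_mul, Padic.norm_p_zpow, neg_neg]
  calc (p:ℝ) ^ ((m:ℤ)+1) * ‖(z : ℚ_[p]) - ((z.appr 1 : ℕ) : ℚ_[p])‖
      ≤ (p:ℝ) ^ ((m:ℤ)+1) * (p:ℝ) ^ (-(1:ℕ):ℤ) :=
        mul_le_mul_of_nonneg_left hcoe (zpow_nonneg aux_p_pos.le _)
    _ = (p:ℝ) ^ (m:ℤ) := by
        rw [← zpow_add₀ (ne_of_gt (aux_p_pos (p := p)))]; norm_num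


lemma aux_digit_unique (m : ℕ) (y : ℚ_[p]) (k k' : Fin p)
    (h : ‖y - ((k : ℕ) : ℚ_[p]) * (p : ℚ_[p]) ^ (-((m : ℤ) + 1))‖ ≤ (p : ℝ) ^ (m : ℤ))
    (h' : ‖y - ((k' : ℕ) : ℚ_[p]) * (p : ℚ_[p]) ^ (-((m : ℤ) + 1))‖ ≤ (p : ℝ) ^ (m : ℤ)) :
    k = k' := by
  by_contra hkk
  have hne : ((k : ℕ) : ℤ) - ((k' : ℕ) : ℤ) ≠ 0 := by
    intro hd
    exact hkk (Fin.ext (by omega))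
  have hnorm1 : ‖((((k : ℕ) : ℤ) - ((k' : ℕ) : ℤ) : ℤ) : ℚ_[p])‖ = 1 := by
    refine le_antisymm (Padic.norm_int_le_one _) (not_lt.mp fun hlt => ?_)
    have hdvd := (Padic.norm_intCast_lt_one_iff).mp hlt
    have hk1 := k.isLt
    have hk2 := k'.isLt
    have := Int.eq_zero_of_abs_lt_dvd hdvd (by
      rw [abs_sub_lt_iff]; constructor <;> [omega; omega])
    exact hne this
  have hdiff : (y - ((k' : ℕ) : ℚ_[p]) * (p : ℚ_[p]) ^ (-((m : ℤ) + 1)))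
      - (y - ((k : ℕ) : ℚ_[p]) * (p : ℚ_[p]) ^ (-((m : ℤ) + 1)))
      = ((((k : ℕ) : ℤ) - ((k' : ℕ) : ℤ) : ℤ) : ℚ_[p]) * (p : ℚ_[p]) ^ (-((m : ℤ) + 1)) := by
    push_cast
    ring
  have hle : ‖((((k : ℕ) : ℤ) - ((k' : ℕ) : ℤ) : ℤ) : ℚ_[p]) * (p : ℚ_[p]) ^ (-((m : ℤ) + 1))‖
      ≤ (p : ℝ) ^ (m : ℤ) := by
    rw [← hdiff, sub_eq_add_neg]
    refine le_trans (Padic.nonarchimedean _ _) (max_le h' (by rwa [norm_neg]))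
  rw [norm_mul, hnorm1, one_mul, Padic.norm_p_zpow, neg_neg] at hle
  exact absurd hle (not_le.mpr (zpow_lt_zpow_right₀ aux_one_lt_p (by omega)))

lemma aux_norm_attained (hn : 0 < n) (x : Fin n → ℚ_[p]) : ∃ i, ‖x‖ = ‖x i‖ := by
  haveI : Nonempty (Fin n) := ⟨⟨0, hn⟩⟩
  obtain ⟨i, -, hi⟩ := Finset.exists_mem_eq_sup (Finset.univ : Finset (Fin n))
    Finset.univ_nonempty (fun i => ‖x i‖₊)
  exact ⟨i, by rw [← coe_nnnorm, ← coe_nnnorm, Pi.nnnorm_def, hi]⟩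

lemma aux_norm_mem (hn : 0 < n) (x : Fin n → ℚ_[p]) (hx : 1 < ‖x‖) :
    ∃ m : ℕ, ‖x‖ = (p : ℝ) ^ ((m : ℤ) + 1) := by
  obtain ⟨i, hi⟩ := aux_norm_attained hn x
  have hxi : x i ≠ 0 := by
    intro h; rw [hi, h, norm_zero] at hx; linarith
  have hval := Padic.norm_eq_zpow_neg_valuation hxi
  have hzpos : 0 < -(x i).valuation := by
    by_contra hle
    push_neg at hle
    have h1 : (p:ℝ) ^ (-(x i).valuation) ≤ (p:ℝ) ^ (0:ℤ) :=
      zpow_le_zpow_right₀ aux_one_lt_p.le hle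
    rw [zpow_zero] at h1
    rw [hi, hval] at hx
    linarith
  refine ⟨(-(x i).valuation - 1).toNat, ?_⟩
  rw [hi, hval]
  congr 1
  omega

lemma aux_sphere_iff (hn : 0 < n) (m : ℕ) (x : Fin n → ℚ_[p]) :
    x ∈ closedBall (0 : Fin n → ℚ_[p]) ((p:ℝ) ^ (m+1)) \ closedBall 0 ((p:ℝ) ^ m) ↔
      ‖x‖ = (p:ℝ) ^ (m+1) := by
  constructor
  · rintro ⟨h1, h2⟩
    rw [mem_closedBall_zero_iff] at h1
    rw [mem_closedBall_zero_iff] at h2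
    push_neg at h2
    have hx1 : 1 < ‖x‖ := lt_of_le_of_lt (one_le_pow₀ aux_one_lt_p.le) h2
    obtain ⟨j, hj⟩ := aux_norm_mem hn x hx1
    rw [hj] at h1 h2 ⊢
    rw [← zpow_natCast (p:ℝ) (m+1)] at h1
    rw [← zpow_natCast (p:ℝ) m] at h2
    have e1 : (m:ℤ) < (j:ℤ) + 1 := (zpow_lt_zpow_iff_right₀ aux_one_lt_p).mp h2
    have e2 : (j:ℤ) + 1 ≤ ((m:ℤ) + 1) := by
      have := (zpow_le_zpow_iff_right₀ aux_one_lt_p).mp h1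
      push_cast at this
      omega
    rw [show ((j:ℤ) + 1) = ((m+1 : ℕ) : ℤ) by omega, zpow_natCast]
  · intro h
    refine ⟨by rw [mem_closedBall_zero_iff, h], ?_⟩
    rw [mem_closedBall_zero_iff, h]
    exact not_le.mpr (pow_lt_pow_right₀ aux_one_lt_p (lt_add_one m))

lemma aux_union (hn : 0 < n) :
    {x : Fin n → ℚ_[p] | 1 < ‖x‖} =
      ⋃ m : ℕ, (closedBall (0 : Fin n → ℚ_[p]) ((p:ℝ) ^ (m+1)) \ closedBall 0 ((p:ℝ) ^ m)) := by
  ext x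
  simp only [Set.mem_setOf_eq, Set.mem_iUnion]
  constructor
  · intro hx
    obtain ⟨m, hm⟩ := aux_norm_mem hn x hx
    refine ⟨m, (aux_sphere_iff hn m x).mpr ?_⟩
    rw [hm, show ((m:ℤ) + 1) = ((m+1 : ℕ) : ℤ) by omega, zpow_natCast]
  · rintro ⟨m, hm⟩
    rw [aux_sphere_iff hn m x] at hm
    rw [hm]
    exact one_lt_pow₀ aux_one_lt_p (Nat.succ_ne_zero m)

lemma aux_measurable_comp {α : Type*} [MeasurableSpace α] {f : α → ℝ}
    (hf : Measurable f) (hc : (Set.range f).Countable) (g : ℝ → ℝ) :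
    Measurable fun x => g (f x) := by
  intro t _
  have heq : (fun x => g (f x)) ⁻¹' t = f ⁻¹' (g ⁻¹' t ∩ Set.range f) := by
    ext x
    simp only [Set.mem_preimage, Set.mem_inter_iff, Set.mem_range]
    exact ⟨fun h => ⟨h, x, rfl⟩, fun h => h.1⟩
  rw [heq]
  exact hf (hc.mono Set.inter_subset_right).measurableSet

lemma aux_range_countable (hn : 0 < n) :
    (Set.range fun x : Fin n → ℚ_[p] => ‖x‖).Countable := by
  refine Set.Countable.mono ?_ (((Set.countable_range fun z : ℤ => (p:ℝ) ^ z).insert 0))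
  rintro r ⟨x, rfl⟩
  obtain ⟨i, hi⟩ := aux_norm_attained hn x
  by_cases h : x i = 0
  · exact Set.mem_insert_iff.mpr (Or.inl (by simp [hi, h]))
  · exact Set.mem_insert_iff.mpr (Or.inr ⟨-(x i).valuation, by show (p:ℝ) ^ (-(x i).valuation) = ‖x‖; rw [hi, Padic.norm_eq_zpow_neg_valuation h]⟩)


open scoped ENNReal

lemma aux_measure_ball (hn : 0 < n) (μ : Measure (Fin n → ℚ_[p])) [μ.IsAddHaarMeasure]
    (hμ : μ (closedBall (0 : Fin n → ℚ_[p]) 1) = 1) :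
    ∀ m : ℕ, μ (closedBall (0 : Fin n → ℚ_[p]) ((p:ℝ) ^ m)) = (p : ℝ≥0∞) ^ (m * n) := by
  intro m
  induction m with
  | zero => simpa using hμ
  | succ m ih =>
    set c : ℚ_[p] := (p : ℚ_[p]) ^ (-((m:ℤ)+1)) with hc
    set B : Set (Fin n → ℚ_[p]) := closedBall 0 ((p:ℝ) ^ m) with hB
    set T : (Fin n → Fin p) → Set (Fin n → ℚ_[p]) :=
      fun v => (fun x => (fun i => -(((v i : ℕ) : ℚ_[p]) * c)) + x) ⁻¹' B with hT
    have hmemT : ∀ v x, x ∈ T v ↔ ∀ i, ‖x i - ((v i : ℕ) : ℚ_[p]) * c‖ ≤ (p:ℝ) ^ (m:ℤ) := by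
      intro v x
      simp only [hT, Set.mem_preimage, hB, mem_closedBall_zero_iff]
      rw [← zpow_natCast (p:ℝ) m, pi_norm_le_iff_of_nonneg (zpow_nonneg aux_p_pos.le _)]
      constructor
      · intro h i
        have := h i
        simpa [neg_add_eq_sub] using this
      · intro h i
        simpa [neg_add_eq_sub] using h i
    have hTmeas : ∀ v, MeasurableSet (T v) :=
      fun v => ((continuous_const.add continuous_id).measurable) measurableSet_closedBall
    have hTμ : ∀ v, μ (T v) = μ B := fun v => measure_preimage_add μ _ B
    have hcover : closedBall (0 : Fin n → ℚ_[p]) ((p:ℝ) ^ (m+1)) = ⋃ v, T v := by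
      ext x
      simp only [Set.mem_iUnion, mem_closedBall_zero_iff]
      constructor
      · intro hx
        have hxi : ∀ i, ‖x i‖ ≤ (p:ℝ) ^ ((m:ℤ)+1) := by
          intro i
          refine le_trans (norm_le_pi_norm x i) (le_trans hx ?_)
          rw [show ((m:ℤ)+1) = ((m+1 : ℕ) : ℤ) by omega, zpow_natCast]
        choose k hk using fun i => aux_digit_exists m (x i) (hxi i)
        exact ⟨fun i => k i, (hmemT _ x).mpr hk⟩
      · rintro ⟨v, hv⟩
        rw [hmemT] at hv
        rw [show ((p:ℝ) ^ (m+1)) = (p:ℝ) ^ ((m:ℤ)+1) by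
          rw [show ((m:ℤ)+1) = ((m+1 : ℕ) : ℤ) by omega, zpow_natCast],
          pi_norm_le_iff_of_nonneg (zpow_nonneg aux_p_pos.le _)]
        intro i
        have h1 : ‖x i - ((v i : ℕ) : ℚ_[p]) * c‖ ≤ (p:ℝ) ^ ((m:ℤ)+1) :=
          le_trans (hv i) (zpow_le_zpow_right₀ aux_one_lt_p.le (by omega))
        have h2 : ‖((v i : ℕ) : ℚ_[p]) * c‖ ≤ (p:ℝ) ^ ((m:ℤ)+1) := by
          rw [norm_mul, hc, Padic.norm_p_zpow, neg_neg]
          have hle1 : ‖((v i : ℕ) : ℚ_[p])‖ ≤ 1 := by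
            have := Padic.norm_int_le_one (p := p) ((v i : ℕ) : ℤ)
            simpa using this
          calc ‖((v i : ℕ) : ℚ_[p])‖ * (p:ℝ) ^ ((m:ℤ)+1)
              ≤ 1 * (p:ℝ) ^ ((m:ℤ)+1) :=
                mul_le_mul_of_nonneg_right hle1 (zpow_nonneg aux_p_pos.le _)
            _ = (p:ℝ) ^ ((m:ℤ)+1) := one_mul _
        calc ‖x i‖ = ‖(x i - ((v i : ℕ) : ℚ_[p]) * c) + ((v i : ℕ) : ℚ_[p]) * c‖ := by
              ring_nf
          _ ≤ max ‖x i - ((v i : ℕ) : ℚ_[p]) * c‖ ‖((v i : ℕ) : ℚ_[p]) * c‖ :=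
              Padic.nonarchimedean _ _
          _ ≤ (p:ℝ) ^ ((m:ℤ)+1) := max_le h1 h2
    have hdisj : Pairwise (Function.onFun Disjoint T) := by
      intro v w hvw
      rw [Function.onFun, Set.disjoint_left]
      intro x hxv hxw
      apply hvw
      funext i
      exact aux_digit_unique m (x i) (v i) (w i) ((hmemT v x).mp hxv i) ((hmemT w x).mp hxw i)
    rw [hcover, measure_iUnion hdisj hTmeas, tsum_fintype]
    simp only [hTμ, Finset.sum_const, Finset.card_univ, nsmul_eq_mul]
    rw [hB, ih]
    rw [show Fintype.card (Fin n → Fin p) = p ^ n by simp [Fintype.card_fun]]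
    rw [Nat.cast_pow, ← pow_add]
    congr 1
    ring

end Aux

/-- For `Re(s) > n/β` the integral `∫_{ℚ_p^n∖ℤ_p^n} A(ξ)^{−s} dⁿξ` converges
absolutely and equals `ζ(s;A_β) = Σ_{m=1}^∞ p^{mn}(1−p^{−n}) A(p^m)^{−s}`; moreover the spectral
zeta function is holomorphic on the half-plane `Re(s) > n/β`. -/
theorem spectral_zeta_integral_formula_and_holomorphy {p n : ℕ} [Fact p.Prime] (hn : 0 < n)
    (μ : Measure (Fin n → ℚ_[p])) [μ.IsAddHaarMeasure]
    (hμ : μ (closedBall (0 : Fin n → ℚ_[p]) 1) = 1)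
    (β C₀ C₁ : ℝ) (hβ : 0 < β) (hC₀ : 0 < C₀) (hC₁ : 0 < C₁)
    (A : (Fin n → ℚ_[p]) → ℝ) (g : ℝ → ℝ)
    (hrad : ∀ ξ : Fin n → ℚ_[p], A ξ = g ‖ξ‖)
    (hlow : ∀ ξ : Fin n → ℚ_[p], C₀ * ‖ξ‖ ^ β ≤ A ξ)
    (hupp : ∀ ξ : Fin n → ℚ_[p], A ξ ≤ C₁ * ‖ξ‖ ^ β) :
    (∀ s : ℂ, (n : ℝ) / β < s.re →
      IntegrableOn (fun ξ => (A ξ : ℂ) ^ (-s)) {ξ : Fin n → ℚ_[p] | 1 < ‖ξ‖} μ ∧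
      (∫ ξ in {ξ : Fin n → ℚ_[p] | 1 < ‖ξ‖}, (A ξ : ℂ) ^ (-s) ∂μ) =
        ∑' m : ℕ, (p : ℂ) ^ ((m + 1) * n) * (1 - (p : ℂ) ^ (-(n : ℤ))) *
          (g ((p : ℝ) ^ (m + 1)) : ℂ) ^ (-s)) ∧
    DifferentiableOn ℂ
      (fun s : ℂ => ∑' m : ℕ, (p : ℂ) ^ ((m + 1) * n) * (1 - (p : ℂ) ^ (-(n : ℤ))) *
        (g ((p : ℝ) ^ (m + 1)) : ℂ) ^ (-s))
      {s : ℂ | (n : ℝ) / β < s.re} := by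
  haveI : Nonempty (Fin n) := ⟨⟨0, hn⟩⟩
  have hp1 : (1:ℝ) < (p:ℝ) := aux_one_lt_p
  have hppos : (0:ℝ) < (p:ℝ) := aux_p_pos
  set G : ℕ → ℝ := fun m => g ((p:ℝ) ^ (m+1)) with hG
  have hgm : ∀ m : ℕ, C₀ * ((p:ℝ) ^ (m+1)) ^ β ≤ G m ∧ G m ≤ C₁ * ((p:ℝ) ^ (m+1)) ^ β := by
    intro m
    have hnorm : ‖(fun _ => (p:ℚ_[p]) ^ (-((m:ℤ)+1)) : Fin n → ℚ_[p])‖ = (p:ℝ) ^ (m+1) := by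
      rw [pi_norm_const, Padic.norm_p_zpow, neg_neg,
        show ((m:ℤ)+1) = ((m+1:ℕ):ℤ) by omega, zpow_natCast]
    constructor
    · have h := hlow (fun _ => (p:ℚ_[p]) ^ (-((m:ℤ)+1)))
      rwa [hrad, hnorm] at h
    · have h := hupp (fun _ => (p:ℚ_[p]) ^ (-((m:ℤ)+1)))
      rwa [hrad, hnorm] at h
  have hgpos : ∀ m : ℕ, 0 < G m := fun m => lt_of_lt_of_le (by positivity) (hgm m).1
  have hGb : ∀ (m : ℕ) (σ a b : ℝ), 0 < a → a ≤ σ → σ ≤ b →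
      (G m) ^ (-σ) ≤ max (C₀ ^ (-a)) (C₀ ^ (-b)) * ((p:ℝ) ^ (-(β * a))) ^ (m+1) := by
    intro m σ a b ha haσ hσb
    have hσ0 : 0 ≤ σ := le_trans ha.le haσ
    have hP1 : (1:ℝ) ≤ ((p:ℝ) ^ (m+1)) ^ β :=
      Real.one_le_rpow (one_le_pow₀ hp1.le) hβ.le
    have h1 : (G m) ^ (-σ) ≤ (C₀ * ((p:ℝ) ^ (m+1)) ^ β) ^ (-σ) :=
      Real.rpow_le_rpow_of_nonpos (by positivity) (hgm m).1 (neg_nonpos.mpr hσ0)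
    have h2 : (C₀ * ((p:ℝ) ^ (m+1)) ^ β) ^ (-σ) = C₀ ^ (-σ) * (((p:ℝ) ^ (m+1)) ^ β) ^ (-σ) :=
      Real.mul_rpow hC₀.le (by positivity)
    have h3 : C₀ ^ (-σ) ≤ max (C₀ ^ (-a)) (C₀ ^ (-b)) := by
      rcases le_total C₀ 1 with h | h
      · exact le_max_of_le_right (Real.rpow_le_rpow_of_exponent_ge hC₀ h (neg_le_neg hσb))
      · exact le_max_of_le_left (Real.rpow_le_rpow_of_exponent_le h (neg_le_neg haσ))
    have h4 : (((p:ℝ) ^ (m+1)) ^ β) ^ (-σ) ≤ (((p:ℝ) ^ (m+1)) ^ β) ^ (-a) :=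
      Real.rpow_le_rpow_of_exponent_le hP1 (neg_le_neg haσ)
    have h5 : (((p:ℝ) ^ (m+1)) ^ β) ^ (-a) = ((p:ℝ) ^ (-(β * a))) ^ (m+1) := by
      rw [← Real.rpow_natCast (p:ℝ) (m+1), ← Real.rpow_mul hppos.le,
        ← Real.rpow_mul hppos.le, ← Real.rpow_natCast ((p:ℝ) ^ (-(β * a))) (m+1),
        ← Real.rpow_mul hppos.le]
      congr 1
      push_cast
      ring
    calc (G m) ^ (-σ) ≤ (C₀ * ((p:ℝ) ^ (m+1)) ^ β) ^ (-σ) := h1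
      _ = C₀ ^ (-σ) * (((p:ℝ) ^ (m+1)) ^ β) ^ (-σ) := h2
      _ ≤ max (C₀ ^ (-a)) (C₀ ^ (-b)) * ((p:ℝ) ^ (-(β * a))) ^ (m+1) :=
          mul_le_mul h3 (le_trans h4 (le_of_eq h5)) (Real.rpow_nonneg (by positivity) _)
            (le_trans (Real.rpow_nonneg hC₀.le _) (le_max_left _ _))
  have hsum : ∀ a : ℝ, (n:ℝ)/β < a →
      Summable (fun m : ℕ => (p:ℝ) ^ ((m+1)*n) * ((p:ℝ) ^ (-(β * a))) ^ (m+1)) := by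
    intro a ha
    have key : ∀ m : ℕ, (p:ℝ) ^ ((m+1)*n) * ((p:ℝ) ^ (-(β * a))) ^ (m+1)
        = ((p:ℝ) ^ ((n:ℝ) - β * a)) ^ (m+1) := by
      intro m
      rw [← Real.rpow_natCast (p:ℝ) ((m+1)*n), ← Real.rpow_natCast ((p:ℝ) ^ (-(β*a))) (m+1),
        ← Real.rpow_mul hppos.le, ← Real.rpow_natCast ((p:ℝ) ^ ((n:ℝ) - β*a)) (m+1),
        ← Real.rpow_mul hppos.le, ← Real.rpow_add hppos]
      congr 1
      push_cast
      ring
    simp only [key]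
    have hr1 : (p:ℝ) ^ ((n:ℝ) - β * a) < 1 := by
      apply Real.rpow_lt_one_of_one_lt_of_neg hp1
      have hlt : (n:ℝ) < a * β := (div_lt_iff₀ hβ).mp ha
      linarith
    have hr0 : 0 ≤ (p:ℝ) ^ ((n:ℝ) - β * a) := Real.rpow_nonneg hppos.le _
    have hgeo := summable_geometric_of_lt_one hr0 hr1
    simpa only [← pow_succ] using hgeo.mul_right ((p:ℝ) ^ ((n:ℝ) - β * a))
  set T : ℕ → Set (Fin n → ℚ_[p]) :=
    fun m => closedBall (0 : Fin n → ℚ_[p]) ((p:ℝ) ^ (m+1)) \ closedBall 0 ((p:ℝ) ^ m) with hTdef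
  have hTmeas : ∀ m, MeasurableSet (T m) :=
    fun m => measurableSet_closedBall.diff measurableSet_closedBall
  have hTdisj : Pairwise (Function.onFun Disjoint T) := by
    intro i j hij
    rw [Function.onFun, Set.disjoint_left]
    intro x hxi hxj
    have h1 := (aux_sphere_iff hn i x).mp hxi
    have h2 := (aux_sphere_iff hn j x).mp hxj
    have := (pow_right_strictMono₀ hp1).injective (h1.symm.trans h2)
    omega
  have hμB := aux_measure_ball hn μ hμ
  have hpn_ne_top : ∀ k : ℕ, ((p:ℝ≥0∞)) ^ k ≠ ⊤ :=
    fun k => ENNReal.pow_ne_top (ENNReal.natCast_ne_top p)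
  have hμT : ∀ m : ℕ, μ (T m) = (p:ℝ≥0∞) ^ ((m+1)*n) - (p:ℝ≥0∞) ^ (m*n) := by
    intro m
    rw [hTdef]
    rw [measure_diff (closedBall_subset_closedBall (pow_le_pow_right₀ hp1.le (Nat.le_succ m)))
      measurableSet_closedBall.nullMeasurableSet (by rw [hμB]; exact hpn_ne_top _), hμB, hμB]
  have hle_pow : ∀ m : ℕ, (p:ℝ≥0∞) ^ (m*n) ≤ (p:ℝ≥0∞) ^ ((m+1)*n) :=
    fun m => pow_le_pow_right₀ (by exact_mod_cast (Fact.out : p.Prime).one_le)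
      (Nat.mul_le_mul_right n (Nat.le_succ m))
  have hμTreal : ∀ m : ℕ, (μ (T m)).toReal = (p:ℝ) ^ ((m+1)*n) - (p:ℝ) ^ (m*n) := by
    intro m
    rw [hμT m, ENNReal.toReal_sub_of_le (hle_pow m) (hpn_ne_top _)]
    simp [ENNReal.toReal_pow]
  refine ⟨fun s hs => ?_, ?_⟩
  · have hσpos : 0 < s.re := by
      have h0 : 0 < (n:ℝ)/β := div_pos (by exact_mod_cast hn) hβ
      linarith
    have hconst : ∀ m : ℕ, ∀ ξ ∈ T m, ((A ξ : ℝ) : ℂ) ^ (-s) = ((G m : ℝ) : ℂ) ^ (-s) := by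
      intro m ξ hξ
      have hξn : ‖ξ‖ = (p:ℝ) ^ (m+1) := (aux_sphere_iff hn m ξ).mp hξ
      rw [hrad, hξn]
    have hnormval : ∀ m : ℕ, ‖((G m : ℝ) : ℂ) ^ (-s)‖ = (G m) ^ (-s.re) := by
      intro m
      rw [Complex.norm_cpow_eq_rpow_re_of_pos (hgpos m), Complex.neg_re]
    have hint : ∀ m : ℕ, IntegrableOn (fun ξ => ((A ξ : ℝ) : ℂ) ^ (-s)) (T m) μ := by
      intro m
      have hfin : μ (T m) < ⊤ := by
        rw [hμT m]
        exact lt_of_le_of_lt tsub_le_self (lt_top_iff_ne_top.mpr (hpn_ne_top _))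
      have hc : IntegrableOn (fun _ : Fin n → ℚ_[p] => ((G m : ℝ) : ℂ) ^ (-s)) (T m) μ :=
        integrableOn_const hfin.ne
      exact hc.congr_fun (fun ξ hξ => (hconst m ξ hξ).symm) (hTmeas m)
    have hIntnorm : ∀ m : ℕ, ∫ ξ in T m, ‖((A ξ : ℝ) : ℂ) ^ (-s)‖ ∂μ
        = (μ (T m)).toReal * (G m) ^ (-s.re) := by
      intro m
      have heq : Set.EqOn (fun ξ => ‖((A ξ : ℝ) : ℂ) ^ (-s)‖)
          (fun _ => (G m) ^ (-s.re)) (T m) := by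
        intro ξ hξ
        simp only []
        rw [hconst m ξ hξ, hnormval m]
      rw [setIntegral_congr_fun (hTmeas m) heq, setIntegral_const, measureReal_def, smul_eq_mul]
    have hSum : Summable (fun m : ℕ => ∫ ξ in T m, ‖((A ξ : ℝ) : ℂ) ^ (-s)‖ ∂μ) := by
      refine Summable.of_nonneg_of_le
        (fun m => by
          rw [hIntnorm m]
          exact mul_nonneg ENNReal.toReal_nonneg (Real.rpow_nonneg (hgpos m).le _))
        (fun m => ?_) (((hsum s.re hs).mul_left (C₀ ^ (-s.re))))
      rw [hIntnorm m]
      have h1 : (μ (T m)).toReal ≤ (p:ℝ) ^ ((m+1)*n) := by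
        rw [hμTreal m]
        have h0 : (0:ℝ) ≤ (p:ℝ) ^ (m*n) := by positivity
        linarith
      have h2 : (G m) ^ (-s.re) ≤ C₀ ^ (-s.re) * ((p:ℝ) ^ (-(β * s.re))) ^ (m+1) := by
        have := hGb m s.re s.re s.re hσpos le_rfl le_rfl
        simpa [max_self] using this
      calc (μ (T m)).toReal * (G m) ^ (-s.re)
          ≤ (p:ℝ) ^ ((m+1)*n) * (C₀ ^ (-s.re) * ((p:ℝ) ^ (-(β * s.re))) ^ (m+1)) :=
            mul_le_mul h1 h2 (Real.rpow_nonneg (hgpos m).le _) (by positivity)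
        _ = C₀ ^ (-s.re) * ((p:ℝ) ^ ((m+1)*n) * ((p:ℝ) ^ (-(β * s.re))) ^ (m+1)) := by ring
    have hIntU : IntegrableOn (fun ξ => ((A ξ : ℝ) : ℂ) ^ (-s)) (⋃ m, T m) μ :=
      integrableOn_iUnion_of_summable_integral_norm hint hSum
    have hUeq : {ξ : Fin n → ℚ_[p] | 1 < ‖ξ‖} = ⋃ m, T m := aux_union hn
    refine ⟨by rw [hUeq]; exact hIntU, ?_⟩
    rw [hUeq, integral_iUnion hTmeas hTdisj hIntU]
    apply tsum_congr
    intro m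
    rw [setIntegral_congr_fun (hTmeas m) (hconst m), setIntegral_const, measureReal_def, hμTreal m]
    rw [Complex.real_smul]
    have hpnz : ((p:ℂ)) ^ n ≠ 0 := pow_ne_zero _ (Nat.cast_ne_zero.mpr (Fact.out : p.Prime).ne_zero)
    congr 1
    push_cast
    rw [zpow_neg, zpow_natCast, mul_sub, mul_one,
      show (m+1)*n = m*n + n from by ring, pow_add, mul_assoc, mul_inv_cancel₀ hpnz, mul_one]
  · intro s₀ hs₀
    rw [Set.mem_setOf_eq] at hs₀
    set a : ℝ := ((n:ℝ)/β + s₀.re)/2 with ha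
    set b : ℝ := s₀.re + 1 with hb
    have ha1 : (n:ℝ)/β < a := by rw [ha]; linarith
    have ha0 : 0 < a := lt_trans (div_pos (by exact_mod_cast hn) hβ) ha1
    have haU : a < s₀.re := by rw [ha]; linarith
    set U' : Set ℂ := {s : ℂ | a < s.re ∧ s.re < b} with hU'
    have hU'open : IsOpen U' :=
      IsOpen.inter (isOpen_lt continuous_const Complex.continuous_re)
        (isOpen_lt Complex.continuous_re continuous_const)
    have hs₀U' : s₀ ∈ U' := ⟨haU, by rw [hb]; linarith⟩
    have hdiff : DifferentiableOn ℂ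
        (fun s : ℂ => ∑' m : ℕ, (p : ℂ) ^ ((m + 1) * n) * (1 - (p : ℂ) ^ (-(n : ℤ))) *
          ((G m : ℝ) : ℂ) ^ (-s)) U' := by
      refine Complex.differentiableOn_tsum_of_summable_norm
        (u := fun m => (‖(1:ℂ) - (p:ℂ) ^ (-(n:ℤ))‖ * max (C₀ ^ (-a)) (C₀ ^ (-b))) *
          ((p:ℝ) ^ ((m+1)*n) * ((p:ℝ) ^ (-(β * a))) ^ (m+1)))
        ((hsum a ha1).mul_left _) (fun m => ?_) hU'open (fun m w hw => ?_)
      · apply Differentiable.differentiableOn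
        exact (differentiable_id.neg.const_cpow
          (Or.inl (Complex.ofReal_ne_zero.mpr (hgpos m).ne'))).const_mul _
      · rw [norm_mul, norm_mul, norm_pow, Complex.norm_natCast,
          Complex.norm_cpow_eq_rpow_re_of_pos (hgpos m), Complex.neg_re]
        have h2 := hGb m w.re a b ha0 (le_of_lt hw.1) (le_of_lt hw.2)
        calc (p:ℝ) ^ ((m+1)*n) * ‖(1:ℂ) - (p:ℂ) ^ (-(n:ℤ))‖ * (G m) ^ (-w.re)
            ≤ (p:ℝ) ^ ((m+1)*n) * ‖(1:ℂ) - (p:ℂ) ^ (-(n:ℤ))‖ *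
              (max (C₀ ^ (-a)) (C₀ ^ (-b)) * ((p:ℝ) ^ (-(β * a))) ^ (m+1)) :=
              mul_le_mul_of_nonneg_left h2 (by positivity)
          _ = (‖(1:ℂ) - (p:ℂ) ^ (-(n:ℤ))‖ * max (C₀ ^ (-a)) (C₀ ^ (-b))) *
              ((p:ℝ) ^ ((m+1)*n) * ((p:ℝ) ^ (-(β * a))) ^ (m+1)) := by ring
    exact (hdiff.differentiableAt (hU'open.mem_nhds hs₀U')).differentiableWithinAt
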